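/- Let X and X' be schemes, φ : X → X' an algebraic isomorphism having an (α,α')-extension φ_{α,α'} for some points α, α', and let f ∈ Iso_{α,α'}(X, X', φ). Assume that (i) X is schurian, and (ii) (X_α)_𝔖 is partly regular for some section 𝔖 of X with α_𝔖 ≠ ∅. Then, with 𝔖' = 𝔖^f, the set of bijections 𝔖 → 𝔖' induced by elements of Iso(X_α, X'_{α'}, φ_{α,α'}) equals Iso((X_α)_𝔖, (X'_{α'})_{𝔖'}, (φ_{α,α'})_{𝔖,𝔖'}). -/

import Mathlib

open Set

universe u

/-- A coherent configuration on a finite set `Ω`: a partition `S` of `Ω × Ω`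
satisfying (C1) the diagonal is a union of classes, (C2) closure under converse,
(C3) well-defined intersection numbers. -/
structure CohCfg (Ω : Type u) : Type u where
  S : Set (Set (Ω × Ω))
  finite : Finite Ω
  cover : ∀ p : Ω × Ω, ∃ s ∈ S, p ∈ s
  disj : ∀ s ∈ S, ∀ t ∈ S, s ≠ t → s ∩ t = ∅
  nonemp : ∀ s ∈ S, s.Nonempty
  diag : ∀ s ∈ S, (∃ p ∈ s, p.1 = p.2) → ∀ p ∈ s, p.1 = p.2
  conv : ∀ s ∈ S, {p : Ω × Ω | (p.2, p.1) ∈ s} ∈ S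
  inum : ∀ r ∈ S, ∀ s ∈ S, ∀ t ∈ S, ∀ p ∈ t, ∀ q ∈ t,
    {γ : Ω | (p.1, γ) ∈ r ∧ (γ, p.2) ∈ s}.ncard =
    {γ : Ω | (q.1, γ) ∈ r ∧ (γ, q.2) ∈ s}.ncard

namespace CohCfg

variable {Ω Ω' : Type u}

/-- The intersection number `c^t_{rs}` computed at the pair `p`. -/
noncomputable def cnum (r s : Set (Ω × Ω)) (p : Ω × Ω) : ℕ :=
  {γ : Ω | (p.1, γ) ∈ r ∧ (γ, p.2) ∈ s}.ncard

/-- `X` is a scheme (homogeneous) if the full diagonal is a basis relation. -/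
def IsScheme (X : CohCfg Ω) : Prop := {p : Ω × Ω | p.1 = p.2} ∈ X.S

/-- Commutativity: `c^t_{rs} = c^t_{sr}`. -/
def IsCommutative (X : CohCfg Ω) : Prop :=
  ∀ r ∈ X.S, ∀ s ∈ X.S, ∀ p : Ω × Ω, cnum r s p = cnum s r p

/-- `s` is a relation of `X`, i.e. a union of basis relations. -/
def IsRelationOf (X : CohCfg Ω) (s : Set (Ω × Ω)) : Prop :=
  ∀ t ∈ X.S, (t ∩ s).Nonempty → t ⊆ s

/-- `X ≤ Y`: every (basis) relation of `X` is a relation of `Y`. -/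
def le (X Y : CohCfg Ω) : Prop := ∀ s ∈ X.S, IsRelationOf Y s

/-- The diagonal relation `1_Δ` of a subset `Δ`. -/
def diagRel (Δ : Set Ω) : Set (Ω × Ω) := {p | p.1 = p.2 ∧ p.1 ∈ Δ}

/-- `Δ` is a fiber of `X`. -/
def IsFiber (X : CohCfg Ω) (Δ : Set Ω) : Prop := diagRel Δ ∈ X.S

/-- `αs = {β | (α,β) ∈ s}`. -/
def pointSet (s : Set (Ω × Ω)) (α : Ω) : Set Ω := {β | (α, β) ∈ s}

/-- `X` is partly regular: some point `α` has `|αs| ≤ 1` for all basis relations. -/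
def PartlyRegular (X : CohCfg Ω) : Prop :=
  ∃ α : Ω, ∀ s ∈ X.S, (pointSet s α).ncard ≤ 1

/-- The image `s^f` of a relation under a map of points. -/
def relImage (f : Ω → Ω') (s : Set (Ω × Ω)) : Set (Ω' × Ω') :=
  (fun p : Ω × Ω => (f p.1, f p.2)) '' s

/-- `φ` is an algebraic isomorphism from `X` to `X'`. -/
structure IsAlgIso (X : CohCfg Ω) (X' : CohCfg Ω')
    (φ : Set (Ω × Ω) → Set (Ω' × Ω')) : Prop where
  bijOn : Set.BijOn φ X.S X'.S
  cnum_eq : ∀ r ∈ X.S, ∀ s ∈ X.S, ∀ t ∈ X.S, ∀ p ∈ t, ∀ q ∈ φ t,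
    cnum r s p = cnum (φ r) (φ s) q

/-- The natural extension of an algebraic isomorphism to unions of basis relations. -/
def algImage (X : CohCfg Ω) (φ : Set (Ω × Ω) → Set (Ω' × Ω')) (s : Set (Ω × Ω)) :
    Set (Ω' × Ω') := ⋃₀ (φ '' {t | t ∈ X.S ∧ t ⊆ s})

/-- The image `Δ^φ` of a fiber under an algebraic isomorphism. -/
def fiberImage (X : CohCfg Ω) (φ : Set (Ω × Ω) → Set (Ω' × Ω')) (Δ : Set Ω) : Set Ω' :=
  {α' | (α', α') ∈ φ (diagRel Δ)}

/-- `Y` is the point extension `X_α`: the smallest coherent configuration `≥ X`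
having `1_α` as a basis relation. -/
def IsPointExt (X : CohCfg Ω) (α : Ω) (Y : CohCfg Ω) : Prop :=
  le X Y ∧ ({(α, α)} : Set (Ω × Ω)) ∈ Y.S ∧
    ∀ Z : CohCfg Ω, le X Z → ({(α, α)} : Set (Ω × Ω)) ∈ Z.S → le Y Z

/-- `φ` has an `(α,α')`-extension: an algebraic isomorphism `X_α → X'_{α'}`
extending `φ` and sending `1_α` to `1_{α'}`. -/
def HasExtension (X : CohCfg Ω) (X' : CohCfg Ω') (φ : Set (Ω × Ω) → Set (Ω' × Ω'))
    (α : Ω) (α' : Ω') : Prop :=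
  ∃ (Y : CohCfg Ω) (Y' : CohCfg Ω') (ψ : Set (Ω × Ω) → Set (Ω' × Ω')),
    IsPointExt X α Y ∧ IsPointExt X' α' Y' ∧ IsAlgIso Y Y' ψ ∧
    (∀ s ∈ X.S, algImage Y ψ s = φ s) ∧ ψ {(α, α)} = {(α', α')}

/-- A sesquiclosed algebraic isomorphism: has an `(α,α')`-extension for all
`α ∈ Δ ∈ F(X)` and `α' ∈ Δ^φ`. -/
def SesquiclosedIso (X : CohCfg Ω) (X' : CohCfg Ω')
    (φ : Set (Ω × Ω) → Set (Ω' × Ω')) : Prop :=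
  IsAlgIso X X' φ ∧
  ∀ Δ : Set Ω, IsFiber X Δ → ∀ α ∈ Δ, ∀ α' ∈ fiberImage X φ Δ, HasExtension X X' φ α α'

/-- `φ` is induced by the combinatorial isomorphism `f`. -/
def InducedBy (X : CohCfg Ω) (X' : CohCfg Ω') (φ : Set (Ω × Ω) → Set (Ω' × Ω'))
    (f : Ω → Ω') : Prop :=
  Function.Bijective f ∧ ∀ s ∈ X.S, φ s = relImage f s

/-- `X` is separable: every algebraic isomorphism from `X` is induced by an isomorphism. -/
def Separable (X : CohCfg Ω) : Prop :=
  ∀ (Ω'' : Type u) (X' : CohCfg Ω'') (φ : Set (Ω × Ω) → Set (Ω'' × Ω'')),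
    IsAlgIso X X' φ → ∃ f : Ω → Ω'', InducedBy X X' φ f

/-- `X` is sesquiseparable: every sesquiclosed algebraic isomorphism from `X`
is induced by an isomorphism. -/
def Sesquiseparable (X : CohCfg Ω) : Prop :=
  ∀ (Ω'' : Type u) (X' : CohCfg Ω'') (φ : Set (Ω × Ω) → Set (Ω'' × Ω'')),
    SesquiclosedIso X X' φ → ∃ f : Ω → Ω'', InducedBy X X' φ f

/-- A sesquiclosed coherent configuration: (S1) the fibers of every one-point
extension `X_α` are the nonempty sets `αs`, and (S2) the identity algebraic
automorphism is sesquiclosed. -/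
def SesquiclosedCfg (X : CohCfg Ω) : Prop :=
  (∀ α : Ω, ∀ Y : CohCfg Ω, IsPointExt X α Y →
     ∀ Δ : Set Ω, (IsFiber Y Δ ↔ ∃ s ∈ X.S, Δ = pointSet s α ∧ Δ.Nonempty)) ∧
  SesquiclosedIso X X id

/-- A parabolic of `X`: a relation that is an equivalence relation on `Ω`. -/
def IsParabolic (X : CohCfg Ω) (e : Set (Ω × Ω)) : Prop :=
  IsRelationOf X e ∧ (∀ a : Ω, (a, a) ∈ e) ∧ (∀ p ∈ e, (p.2, p.1) ∈ e) ∧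
    ∀ a b c : Ω, (a, b) ∈ e → (b, c) ∈ e → (a, c) ∈ e

/-- The class of `a` modulo the equivalence relation `e`. -/
def eClass (e : Set (Ω × Ω)) (a : Ω) : Set Ω := {b | (a, b) ∈ e}

/-- `Δ/e` is a section of `X`: `e` is a parabolic and `Δ` is a class of a
parabolic containing `e`. -/
def IsSection (X : CohCfg Ω) (Δ : Set Ω) (e : Set (Ω × Ω)) : Prop :=
  IsParabolic X e ∧ ∃ d : Set (Ω × Ω), IsParabolic X d ∧ e ⊆ d ∧ ∃ a : Ω, Δ = eClass d a

/-- The point set of the section `Δ/e`: the `e`-classes of points of `Δ`. -/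
abbrev Sec (Δ : Set Ω) (e : Set (Ω × Ω)) : Type u :=
  {Γ : Set Ω // ∃ a ∈ Δ, Γ = eClass e a}

/-- The relation `s_𝔖` on the section `𝔖 = Δ/e`. -/
def secRel (Δ : Set Ω) (e : Set (Ω × Ω)) (s : Set (Ω × Ω)) :
    Set (Sec Δ e × Sec Δ e) :=
  {p | ∃ a ∈ p.1.1, ∃ b ∈ p.2.1, (a, b) ∈ s}

/-- `Y` is the coherent configuration `X_𝔖` on the section `𝔖 = Δ/e`. -/
def IsSectionCfg (X : CohCfg Ω) (Δ : Set Ω) (e : Set (Ω × Ω))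
    (Y : CohCfg (Sec Δ e)) : Prop :=
  Y.S = {t | ∃ s ∈ X.S, t = secRel Δ e s ∧ t.Nonempty}

/-- The restriction `s_Δ` of a relation to a subset `Δ`. -/
def restRel (Δ : Set Ω) (s : Set (Ω × Ω)) : Set (↥Δ × ↥Δ) := {p | (p.1.1, p.2.1) ∈ s}

/-- `Y` is the restriction `X_Δ` of `X` to `Δ`. -/
def IsRestrictionCfg (X : CohCfg Ω) (Δ : Set Ω) (Y : CohCfg ↥Δ) : Prop :=
  Y.S = {t | ∃ s ∈ X.S, t = restRel Δ s ∧ t.Nonempty}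

/-- `Iso(X, X', φ)`: isomorphisms inducing the algebraic isomorphism `φ`. -/
def IsoSet (X : CohCfg Ω) (X' : CohCfg Ω') (φ : Set (Ω × Ω) → Set (Ω' × Ω')) :
    Set (Ω → Ω') :=
  {f | Function.Bijective f ∧ ∀ s ∈ X.S, relImage f s = φ s}

/-- `X` is schurian: its basis relations are the orbits of `Aut(X)` on `Ω × Ω`. -/
def Schurian (X : CohCfg Ω) : Prop :=
  ∀ s ∈ X.S, ∀ p ∈ s, ∀ q ∈ s, ∃ f : Ω → Ω,
    (Function.Bijective f ∧ ∀ t ∈ X.S, relImage f t = t) ∧ (f p.1, f p.2) = q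

/-- `e ⊆ rad(s)`: `s` is a union of products of pairs of `e`-classes it meets. -/
def RadGE (e s : Set (Ω × Ω)) : Prop :=
  ∀ p ∈ s, ∀ a b : Ω, (p.1, a) ∈ e → (p.2, b) ∈ e → (a, b) ∈ s

/-- The `e₁/e₀`-condition: every basis relation disjoint from `e₁` has `e₀` in
its radical. -/
def WedgeCond (X : CohCfg Ω) (e0 e1 : Set (Ω × Ω)) : Prop :=
  ∀ s ∈ X.S, s ∩ e1 = ∅ → RadGE e0 s

/-- A circulant coherent configuration on a group `G`: right translations are
automorphisms. -/
def IsCirculant {G : Type u} [Group G] (X : CohCfg G) : Prop :=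
  ∀ g : G, ∀ s ∈ X.S, relImage (fun x => x * g) s = s

/-- The equivalence relation `e(H)` whose classes are the cosets of `H`. -/
def eRelSet {G : Type u} [Group G] (H : Subgroup G) : Set (G × G) :=
  {p | p.1⁻¹ * p.2 ∈ H}

/-- `H` is an `X`-group. -/
def IsXGroup {G : Type u} [Group G] (X : CohCfg G) (H : Subgroup G) : Prop :=
  IsParabolic X (eRelSet H)

/-- A normal circulant scheme: every automorphism fixing the identity is a
group automorphism. -/
def IsNormalCirc {G : Type u} [Group G] (X : CohCfg G) : Prop :=
  ∀ f : G → G, Function.Bijective f → (∀ s ∈ X.S, relImage f s = s) → f 1 = 1 →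
    ∀ a b : G, f (a * b) = f a * f b

/-- Normality of a circulant scheme presented on a section `Δ/e` of a group `G`
(the points are cosets): every automorphism fixing the class of `1` respects the
coset multiplication. -/
def IsNormalSec {G : Type u} [Group G] (Δ : Set G) (e : Set (G × G))
    (Y : CohCfg (Sec Δ e)) : Prop :=
  ∀ F : Sec Δ e → Sec Δ e, Function.Bijective F → (∀ t ∈ Y.S, relImage F t = t) →
    (∀ Γ : Sec Δ e, (1 : G) ∈ Γ.1 → F Γ = Γ) →
    ∀ Γ Γ' Γ'' : Sec Δ e, Γ''.1 = Set.image2 (· * ·) Γ.1 Γ'.1 →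
      (F Γ'').1 = Set.image2 (· * ·) (F Γ).1 (F Γ').1

/-- Normality of a circulant scheme presented on (the subtype of) a subgroup `U ⊆ G`. -/
def IsNormalRest {G : Type u} [Group G] (U : Set G) (Y : CohCfg ↥U) : Prop :=
  ∀ F : ↥U → ↥U, Function.Bijective F → (∀ t ∈ Y.S, relImage F t = t) →
    (∀ x : ↥U, x.1 = 1 → F x = x) →
    ∀ x y z : ↥U, z.1 = x.1 * y.1 → (F z).1 = (F x).1 * (F y).1

/-- `N` is an `X_U`-group: `N ≤ U` and the restriction of `e(N)` to `U` is a
relation of the restriction `X_U`. -/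
def SubXGroup {G : Type u} [Group G] (X : CohCfg G) (U N : Subgroup G) : Prop :=
  N ≤ U ∧ ∀ s ∈ X.S, (∃ p ∈ s, p.1 ∈ U ∧ p.2 ∈ U ∧ p.1⁻¹ * p.2 ∈ N) →
    ∀ p ∈ s, p.1 ∈ U → p.2 ∈ U → p.1⁻¹ * p.2 ∈ N


/-! ### Auxiliary lemmas -/

section Auxiliary

variable {Ω Ω' Ω'' : Type u}

lemma relImage_id (s : Set (Ω × Ω)) : relImage id s = s := by
  simp [relImage]

lemma relImage_comp (g : Ω' → Ω'') (f : Ω → Ω') (s : Set (Ω × Ω)) :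
    relImage (g ∘ f) s = relImage g (relImage f s) := by
  simp only [relImage, Set.image_image]
  rfl

lemma mem_relImage {f : Ω → Ω'} {s : Set (Ω × Ω)} {a b : Ω} (h : (a, b) ∈ s) :
    (f a, f b) ∈ relImage f s := ⟨(a, b), h, rfl⟩

lemma relImage_mono (f : Ω → Ω') {s t : Set (Ω × Ω)} (h : s ⊆ t) :
    relImage f s ⊆ relImage f t := Set.image_mono h

lemma mem_relImage_iff {f : Ω → Ω'} (hf : Function.Injective f) {s : Set (Ω × Ω)}
    {a b : Ω} : (f a, f b) ∈ relImage f s ↔ (a, b) ∈ s := by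
  constructor
  · rintro ⟨⟨x, y⟩, hxy, h⟩
    obtain ⟨h1, h2⟩ := Prod.mk.injEq _ _ _ _ ▸ h
    rwa [← hf h1, ← hf h2]
  · exact mem_relImage

lemma relImage_symm_comp {f : Ω → Ω'} (hf : Function.Bijective f) (s : Set (Ω × Ω)) :
    relImage (Equiv.ofBijective f hf).symm (relImage f s) = s := by
  rw [← relImage_comp]
  have h : ((Equiv.ofBijective f hf).symm ∘ f : Ω → Ω) = id :=
    funext fun x => (Equiv.ofBijective f hf).symm_apply_apply x
  rw [h, relImage_id]

lemma relImage_comp_symm {f : Ω → Ω'} (hf : Function.Bijective f) (s : Set (Ω' × Ω')) :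
    relImage f (relImage (Equiv.ofBijective f hf).symm s) = s := by
  rw [← relImage_comp]
  have h : (f ∘ (Equiv.ofBijective f hf).symm : Ω' → Ω') = id :=
    funext fun x => (Equiv.ofBijective f hf).apply_symm_apply x
  rw [h, relImage_id]

/-- basis relations intersecting nontrivially are equal -/
lemma basis_eq (X : CohCfg Ω) {s t : Set (Ω × Ω)} (hs : s ∈ X.S) (ht : t ∈ X.S)
    (h : (s ∩ t).Nonempty) : s = t := by
  by_contra hne
  rw [X.disj s hs t ht hne] at h
  exact Set.not_nonempty_empty h

/-- every basis relation of a refinement lies in a basis relation of X -/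
lemma exists_coarse {X Y : CohCfg Ω} (hle : le X Y) {s : Set (Ω × Ω)} (hs : s ∈ Y.S) :
    ∃ t ∈ X.S, s ⊆ t := by
  obtain ⟨p, hp⟩ := Y.nonemp s hs
  obtain ⟨t, ht, hpt⟩ := X.cover p
  exact ⟨t, ht, hle t ht s hs ⟨p, hp, hpt⟩⟩

/-- a bijection fixing all basis relations fixes every relation of X -/
lemma relImage_eq_self_of_rel {X : CohCfg Ω} {d : Set (Ω × Ω)} (hd : IsRelationOf X d)
    {k : Ω → Ω} (hkb : Function.Bijective k) (hk : ∀ t ∈ X.S, relImage k t = t) :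
    relImage k d = d := by
  have hsub : ∀ {x y : Ω}, (x, y) ∈ d → (k x, k y) ∈ d := by
    intro x y hxy
    obtain ⟨t, ht, hpt⟩ := X.cover (x, y)
    have htd : t ⊆ d := hd t ht ⟨(x, y), hpt, hxy⟩
    refine htd ?_
    rw [← hk t ht]
    exact mem_relImage hpt
  apply Set.Subset.antisymm
  · rintro ⟨x, y⟩ ⟨⟨a, b⟩, hab, h⟩
    cases h; exact hsub hab
  · rintro ⟨x, y⟩ hxy
    obtain ⟨a, ha⟩ := hkb.2 x
    obtain ⟨b, hb⟩ := hkb.2 y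
    subst ha; subst hb
    refine mem_relImage ?_
    obtain ⟨t, ht, hpt⟩ := X.cover (a, b)
    have h2 : (k a, k b) ∈ t := by rw [← hk t ht]; exact mem_relImage hpt
    exact hd t ht ⟨(k a, k b), h2, hxy⟩ hpt

end Auxiliary

section Transport

variable {Ω Ω' : Type u}

lemma cnum_set_eq {f : Ω → Ω'} (hf : Function.Bijective f) (r s : Set (Ω × Ω)) (p : Ω × Ω) :
    {γ' : Ω' | (f p.1, γ') ∈ relImage f r ∧ (γ', f p.2) ∈ relImage f s}
      = f '' {γ : Ω | (p.1, γ) ∈ r ∧ (γ, p.2) ∈ s} := by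
  ext γ'
  constructor
  · rintro ⟨⟨⟨a, b⟩, hab, hab'⟩, ⟨⟨c, d⟩, hcd, hcd'⟩⟩
    simp only [Prod.mk.injEq] at hab' hcd'
    obtain ⟨ha, hb⟩ := hab'
    obtain ⟨hc, hd⟩ := hcd'
    have ha' : a = p.1 := hf.1 ha
    have hd' : d = p.2 := hf.1 hd
    have hbc : b = c := hf.1 (hb.trans hc.symm)
    subst ha'; subst hd'; subst hbc
    exact ⟨b, ⟨hab, hcd⟩, hb⟩
  · rintro ⟨γ, ⟨h1, h2⟩, rfl⟩
    exact ⟨mem_relImage h1, mem_relImage h2⟩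

lemma cnum_relImage {f : Ω → Ω'} (hf : Function.Bijective f) (r s : Set (Ω × Ω)) (p : Ω × Ω) :
    cnum (relImage f r) (relImage f s) (f p.1, f p.2) = cnum r s p := by
  unfold cnum
  have h := cnum_set_eq hf r s p
  simp only at h ⊢
  rw [h]
  exact Set.ncard_image_of_injective _ hf.1

end Transport

section Orbit

variable {Ω : Type u}

/-- automorphisms of `X` fixing the point `α` -/
def AutPt (X : CohCfg Ω) (α : Ω) : Set (Ω → Ω) :=
  {k | Function.Bijective k ∧ (∀ t ∈ X.S, relImage k t = t) ∧ k α = α}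

lemma autPt_id (X : CohCfg Ω) (α : Ω) : id ∈ AutPt X α :=
  ⟨Function.bijective_id, fun t _ => relImage_id t, rfl⟩

lemma autPt_comp {X : CohCfg Ω} {α : Ω} {k₁ k₂ : Ω → Ω}
    (h1 : k₁ ∈ AutPt X α) (h2 : k₂ ∈ AutPt X α) : (k₁ ∘ k₂) ∈ AutPt X α := by
  refine ⟨h1.1.comp h2.1, fun t ht => ?_, ?_⟩
  · rw [relImage_comp, h2.2.1 t ht, h1.2.1 t ht]
  · simp [h2.2.2, h1.2.2]

lemma autPt_inv {X : CohCfg Ω} {α : Ω} {k : Ω → Ω} (hk : k ∈ AutPt X α) :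
    ⇑(Equiv.ofBijective k hk.1).symm ∈ AutPt X α := by
  refine ⟨(Equiv.ofBijective k hk.1).symm.bijective, fun t ht => ?_, ?_⟩
  · conv_lhs => rw [← hk.2.1 t ht]
    exact relImage_symm_comp hk.1 t
  · rw [Equiv.symm_apply_eq]
    exact hk.2.2.symm

/-- orbit of a pair under `AutPt X α` -/
def orb2 (X : CohCfg Ω) (α : Ω) (p : Ω × Ω) : Set (Ω × Ω) :=
  {q | ∃ k ∈ AutPt X α, q = (k p.1, k p.2)}

lemma mem_orb2_self (X : CohCfg Ω) (α : Ω) (p : Ω × Ω) : p ∈ orb2 X α p :=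
  ⟨id, autPt_id X α, rfl⟩

lemma orb2_invariant {X : CohCfg Ω} {α : Ω} {k : Ω → Ω} (hk : k ∈ AutPt X α)
    {p q : Ω × Ω} (hq : q ∈ orb2 X α p) : (k q.1, k q.2) ∈ orb2 X α p := by
  obtain ⟨k', hk', rfl⟩ := hq
  exact ⟨k ∘ k', autPt_comp hk hk', rfl⟩

lemma orb2_invariant_iff {X : CohCfg Ω} {α : Ω} {k : Ω → Ω} (hk : k ∈ AutPt X α)
    {p : Ω × Ω} {x y : Ω} : (k x, k y) ∈ orb2 X α p ↔ (x, y) ∈ orb2 X α p := by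
  constructor
  · intro h
    have h2 := orb2_invariant (autPt_inv hk) h
    simpa only [Equiv.ofBijective_symm_apply_apply] using h2
  · exact fun h => orb2_invariant hk (p := p) (q := (x, y)) h

lemma orb2_eq_of_mem {X : CohCfg Ω} {α : Ω} {p q : Ω × Ω} (hq : q ∈ orb2 X α p) :
    orb2 X α q = orb2 X α p := by
  obtain ⟨k, hk, rfl⟩ := hq
  ext ⟨x, y⟩
  constructor
  · rintro ⟨k', hk', h⟩
    simp only [Prod.mk.injEq] at h
    obtain ⟨h1, h2⟩ := h
    exact ⟨k' ∘ k, autPt_comp hk' hk, by simp [h1, h2]⟩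
  · rintro ⟨k', hk', h⟩
    simp only [Prod.mk.injEq] at h
    obtain ⟨h1, h2⟩ := h
    refine ⟨k' ∘ (Equiv.ofBijective k hk.1).symm, autPt_comp hk' (autPt_inv hk), ?_⟩
    simp only [Function.comp_apply, Equiv.ofBijective_symm_apply_apply, h1, h2]

/-- the coherent configuration of orbits of `AutPt X α` -/
noncomputable def orbCfg (X : CohCfg Ω) (α : Ω) : CohCfg Ω where
  S := {r | ∃ p, r = orb2 X α p}
  finite := X.finite
  cover p := ⟨orb2 X α p, ⟨p, rfl⟩, mem_orb2_self X α p⟩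
  disj := by
    rintro s ⟨p, rfl⟩ t ⟨q, rfl⟩ hne
    rw [Set.eq_empty_iff_forall_notMem]
    rintro x ⟨hx1, hx2⟩
    exact hne ((orb2_eq_of_mem hx1).symm.trans (orb2_eq_of_mem hx2))
  nonemp := by rintro s ⟨p, rfl⟩; exact ⟨p, mem_orb2_self X α p⟩
  diag := by
    rintro s ⟨p, rfl⟩ ⟨⟨x, y⟩, ⟨k, hk, hxy⟩, hd⟩ ⟨a, b⟩ ⟨k', hk', hab⟩
    simp only [Prod.mk.injEq] at hxy hab
    simp only at hd
    obtain ⟨h1, h2⟩ := hxy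
    obtain ⟨h3, h4⟩ := hab
    have : p.1 = p.2 := hk.1.1 (by rw [← h1, ← h2, hd])
    rw [h3, h4, this]
  conv := by
    rintro s ⟨⟨a, b⟩, rfl⟩
    refine ⟨(b, a), ?_⟩
    ext ⟨x, y⟩
    constructor
    · rintro ⟨k, hk, h⟩
      simp only [Set.mem_setOf_eq, Prod.mk.injEq] at h ⊢
      exact ⟨k, hk, by simp [h.1, h.2]⟩
    · rintro ⟨k, hk, h⟩
      simp only [Prod.mk.injEq] at h
      exact ⟨k, hk, by simp [h.1, h.2]⟩
  inum := by
    rintro r ⟨pr, rfl⟩ s ⟨ps, rfl⟩ t ⟨pt, rfl⟩ p hp q hq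
    rw [← orb2_eq_of_mem hp] at hq
    obtain ⟨k, hk, hq⟩ := hq
    have hset : {γ : Ω | (q.1, γ) ∈ orb2 X α pr ∧ (γ, q.2) ∈ orb2 X α ps}
        = k '' {γ : Ω | (p.1, γ) ∈ orb2 X α pr ∧ (γ, p.2) ∈ orb2 X α ps} := by
      ext γ'
      constructor
      · rintro ⟨h1, h2⟩
        obtain ⟨γ, rfl⟩ := hk.1.2 γ'
        rw [hq] at h1 h2
        simp only at h1 h2
        exact ⟨γ, ⟨(orb2_invariant_iff hk).mp h1, (orb2_invariant_iff hk).mp h2⟩, rfl⟩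
      · rintro ⟨γ, ⟨h1, h2⟩, rfl⟩
        rw [hq]
        exact ⟨(orb2_invariant_iff hk).mpr h1, (orb2_invariant_iff hk).mpr h2⟩
    rw [hset, Set.ncard_image_of_injective _ hk.1.1]

lemma orb2_pt (X : CohCfg Ω) (α : Ω) : orb2 X α (α, α) = {(α, α)} := by
  ext ⟨x, y⟩
  constructor
  · rintro ⟨k, hk, h⟩
    simp only [Prod.mk.injEq] at h
    simp [h.1, h.2, hk.2.2]
  · rintro h
    simp only [Set.mem_singleton_iff, Prod.mk.injEq] at h
    rw [h.1, h.2]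
    exact mem_orb2_self X α _

/-- key consequence of minimality: point automorphisms fix every basis relation
of the point extension -/
lemma autPt_fixes_ext {X Xα : CohCfg Ω} {α : Ω} (hXα : IsPointExt X α Xα)
    {k : Ω → Ω} (hk : k ∈ AutPt X α) {s : Set (Ω × Ω)} (hs : s ∈ Xα.S) :
    relImage k s = s := by
  have hle : le Xα (orbCfg X α) := by
    refine hXα.2.2 (orbCfg X α) ?_ ?_
    · intro t ht
      rintro u ⟨p, rfl⟩ ⟨⟨x, y⟩, ⟨⟨k0, hk0, hxy⟩, hxyt⟩⟩
      have hpt : p ∈ t := by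
        rw [hxy] at hxyt
        rw [← hk0.2.1 t ht] at hxyt
        have := (mem_relImage_iff hk0.1.1 (s := t) (a := p.1) (b := p.2)).mp hxyt
        simpa using this
      rintro ⟨a, b⟩ ⟨k1, hk1, hab⟩
      rw [hab, ← hk1.2.1 t ht]
      exact mem_relImage hpt
    · exact ⟨(α, α), (orb2_pt X α).symm⟩
  have hsub : ∀ {x y : Ω}, (x, y) ∈ s → (k x, k y) ∈ s := by
    intro x y hxy
    have h1 : orb2 X α (x, y) ⊆ s :=
      hle s hs (orb2 X α (x, y)) ⟨(x, y), rfl⟩ ⟨(x, y), mem_orb2_self X α _, hxy⟩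
    exact h1 ⟨k, hk, rfl⟩
  apply Set.Subset.antisymm
  · rintro ⟨x, y⟩ ⟨⟨a, b⟩, hab, h⟩
    cases h; exact hsub hab
  · rintro ⟨x, y⟩ hxy
    obtain ⟨a, ha⟩ := hk.1.2 x
    obtain ⟨b, hb⟩ := hk.1.2 y
    subst ha; subst hb
    refine mem_relImage ?_
    have h1 : orb2 X α (k a, k b) ⊆ s :=
      hle s hs _ ⟨(k a, k b), rfl⟩ ⟨(k a, k b), mem_orb2_self X α _, hxy⟩
    have : ((Equiv.ofBijective k hk.1).symm (k a), (Equiv.ofBijective k hk.1).symm (k b))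
        ∈ orb2 X α (k a, k b) := ⟨_, autPt_inv hk, rfl⟩
    simpa using h1 this

/-- Schurian: two pairs `(α,x)`, `(α,x')` in the same basis relation are conjugate
under `AutPt X α` -/
lemma schurian_pt {X : CohCfg Ω} (hschur : Schurian X) {r : Set (Ω × Ω)} (hr : r ∈ X.S)
    {α x x' : Ω} (h1 : (α, x) ∈ r) (h2 : (α, x') ∈ r) : ∃ k ∈ AutPt X α, k x = x' := by
  obtain ⟨k, ⟨hbij, hfix⟩, heq⟩ := hschur r hr (α, x) h1 (α, x') h2
  simp only [Prod.mk.injEq] at heq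
  exact ⟨k, ⟨hbij, hfix, heq.1⟩, heq.2⟩

end Orbit

section Push

variable {Ω Ω' : Type u}

lemma relImage_singleton (f : Ω → Ω') (a b : Ω) :
    relImage f {(a, b)} = {(f a, f b)} := by
  simp [relImage]

lemma relImage_conv (f : Ω → Ω') (hf : Function.Injective f) (s : Set (Ω × Ω)) :
    {p : Ω' × Ω' | (p.2, p.1) ∈ relImage f s} = relImage f {p | (p.2, p.1) ∈ s} := by
  ext ⟨x, y⟩
  constructor
  · rintro ⟨⟨b, a⟩, hba, h⟩
    simp only [Prod.mk.injEq] at h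
    exact ⟨(a, b), hba, by simp [h.1, h.2]⟩
  · rintro ⟨⟨a, b⟩, hab, h⟩
    simp only [Prod.mk.injEq] at h
    obtain ⟨h1, h2⟩ := h
    exact ⟨(b, a), hab, by simp [h1, h2]⟩

/-- pushforward of a coherent configuration along a bijection -/
noncomputable def pushCfg (f : Ω → Ω') (hf : Function.Bijective f) (X : CohCfg Ω) :
    CohCfg Ω' where
  S := (relImage f) '' X.S
  finite := by
    haveI := X.finite
    exact Finite.of_surjective f hf.2
  cover := by
    intro p
    obtain ⟨a, ha⟩ := hf.2 p.1
    obtain ⟨b, hb⟩ := hf.2 p.2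
    obtain ⟨t, ht, hpt⟩ := X.cover (a, b)
    refine ⟨relImage f t, ⟨t, ht, rfl⟩, ?_⟩
    have hp : p = (f a, f b) := Prod.ext ha.symm hb.symm
    rw [hp]
    exact mem_relImage hpt
  disj := by
    rintro s' ⟨s, hs, rfl⟩ t' ⟨t, ht, rfl⟩ hne
    have hst : s ≠ t := fun h => hne (by rw [h])
    rw [Set.eq_empty_iff_forall_notMem]
    rintro ⟨x, y⟩ ⟨⟨⟨a, b⟩, hab, h1⟩, ⟨⟨c, d⟩, hcd, h2⟩⟩
    simp only [Prod.mk.injEq] at h1 h2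
    have hac : a = c := hf.1 (h1.1.trans h2.1.symm)
    have hbd : b = d := hf.1 (h1.2.trans h2.2.symm)
    subst hac; subst hbd
    have := X.disj s hs t ht hst
    rw [Set.eq_empty_iff_forall_notMem] at this
    exact this (a, b) ⟨hab, hcd⟩
  nonemp := by
    rintro s' ⟨s, hs, rfl⟩
    obtain ⟨p, hp⟩ := X.nonemp s hs
    exact ⟨_, mem_relImage (a := p.1) (b := p.2) hp⟩
  diag := by
    rintro s' ⟨s, hs, rfl⟩ ⟨⟨x, y⟩, ⟨⟨a, b⟩, hab, h1⟩, hd⟩ ⟨u, v⟩ ⟨⟨c, d⟩, hcd, h2⟩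
    simp only [Prod.mk.injEq] at h1 h2
    simp only at hd
    have hab' : a = b := hf.1 (by rw [h1.1, h1.2, hd])
    have : ∀ p ∈ s, (p : Ω × Ω).1 = p.2 := X.diag s hs ⟨(a, b), hab, hab'⟩
    have hcd' : c = d := this (c, d) hcd
    simp only
    rw [← h2.1, ← h2.2, hcd']
  conv := by
    rintro s' ⟨s, hs, rfl⟩
    rw [relImage_conv f hf.1]
    exact ⟨_, X.conv s hs, rfl⟩
  inum := by
    rintro r' ⟨r, hr, rfl⟩ s' ⟨s, hs, rfl⟩ t' ⟨t, ht, rfl⟩ p hp q hq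
    obtain ⟨⟨a, b⟩, hab, rfl⟩ := hp
    obtain ⟨⟨c, d⟩, hcd, rfl⟩ := hq
    have h1 := cnum_relImage hf r s (a, b)
    have h2 := cnum_relImage hf r s (c, d)
    unfold cnum at h1 h2
    simp only at h1 h2 ⊢
    rw [h1, h2]
    exact X.inum r hr s hs t ht (a, b) hab (c, d) hcd

/-- the partition of the point extension on the target side is the pushforward
of the partition of the point extension on the source side -/
lemma pointExt_push_eq {X : CohCfg Ω} {X' : CohCfg Ω'} {α : Ω} {α' : Ω'}
    {Xα : CohCfg Ω} {X'α' : CohCfg Ω'}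
    (hXα : IsPointExt X α Xα) (hX'α' : IsPointExt X' α' X'α')
    {φ : Set (Ω × Ω) → Set (Ω' × Ω')} (hφ : IsAlgIso X X' φ)
    {f : Ω → Ω'} (hfb : Function.Bijective f)
    (hfφ : ∀ s ∈ X.S, relImage f s = φ s) (hfα : f α = α')
    {s' : Set (Ω' × Ω')} : s' ∈ X'α'.S ↔ ∃ s ∈ Xα.S, s' = relImage f s := by
  set finv : Ω' → Ω := ⇑(Equiv.ofBijective f hfb).symm with hfinv
  have hfinvb : Function.Bijective finv := (Equiv.ofBijective f hfb).symm.bijective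
  have hfinvf : ∀ s : Set (Ω × Ω), relImage finv (relImage f s) = s :=
    fun s => relImage_symm_comp hfb s
  have hffinv : ∀ s : Set (Ω' × Ω'), relImage f (relImage finv s) = s :=
    fun s => relImage_comp_symm hfb s
  have happ : ∀ y : Ω', f (finv y) = y := fun y => (Equiv.ofBijective f hfb).apply_symm_apply y
  -- le X'α' (pushCfg f Xα)
  have hleA : le X'α' (pushCfg f hfb Xα) := by
    refine hX'α'.2.2 _ ?_ ?_
    · intro t' ht'
      obtain ⟨t, ht, hφt⟩ := hφ.bijOn.surjOn ht'
      rintro c ⟨s, hs, rfl⟩ ⟨q, ⟨⟨⟨a, b⟩, hab, rfl⟩, hq2⟩⟩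
      have habt : (a, b) ∈ t := by
        have : (f a, f b) ∈ relImage f t := by rw [hfφ t ht, hφt]; exact hq2
        exact (mem_relImage_iff hfb.1).mp this
      have hst : s ⊆ t := hXα.1 t ht s hs ⟨(a, b), hab, habt⟩
      calc relImage f s ⊆ relImage f t := relImage_mono f hst
        _ = t' := by rw [hfφ t ht, hφt]
    · refine ⟨{(α, α)}, hXα.2.1, ?_⟩
      rw [relImage_singleton, hfα]
  -- le Xα (pushCfg finv X'α')
  have hleB : le Xα (pushCfg finv hfinvb X'α') := by
    refine hXα.2.2 _ ?_ ?_
    · intro t ht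
      rintro c ⟨s', hs', rfl⟩ ⟨q, ⟨⟨⟨x, y⟩, hxy, rfl⟩, hq2⟩⟩
      have hxyφt : (x, y) ∈ φ t := by
        rw [← hfφ t ht]
        have : (f (finv x), f (finv y)) ∈ relImage f t := mem_relImage hq2
        simpa only [happ, Prod.mk.eta] using this
      have hsub : s' ⊆ φ t := hX'α'.1 (φ t) (hφ.bijOn.mapsTo ht) s' hs' ⟨(x, y), hxy, hxyφt⟩
      calc relImage finv s' ⊆ relImage finv (φ t) := relImage_mono finv hsub
        _ = t := by rw [← hfφ t ht, hfinvf]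
    · refine ⟨{(α', α')}, hX'α'.2.1, ?_⟩
      rw [relImage_singleton]
      have : finv α' = α := by rw [← hfα, hfinv]; exact (Equiv.ofBijective f hfb).symm_apply_apply α
      rw [this]
  constructor
  · intro hs'
    obtain ⟨p', hp'⟩ := X'α'.nonemp s' hs'
    obtain ⟨c, hc, hpc⟩ := (pushCfg f hfb Xα).cover p'
    have hcs' : c ⊆ s' := hleA s' hs' c hc ⟨p', hpc, hp'⟩
    obtain ⟨s, hs, rfl⟩ := hc
    refine ⟨s, hs, ?_⟩
    -- show s' ⊆ relImage f s
    obtain ⟨⟨a, b⟩, hab, rfl⟩ := hpc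
    have hmem : (a, b) ∈ relImage finv s' ∩ s := by
      constructor
      · have := mem_relImage (f := finv) hp'
        simpa only [hfinv, Equiv.ofBijective_symm_apply_apply] using this
      · exact hab
    have hsub : relImage finv s' ⊆ s :=
      hleB s hs _ ⟨s', hs', rfl⟩ ⟨(a, b), hmem.1, hmem.2⟩
    have : s' ⊆ relImage f s := by
      intro q hq
      have : (f ((finv q.1)), f (finv q.2)) ∈ relImage f s :=
        mem_relImage (hsub (mem_relImage (a := q.1) (b := q.2) hq))
      simpa only [happ, Prod.mk.eta] using this
    exact Set.Subset.antisymm this hcs'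
  · rintro ⟨s, hs, rfl⟩
    obtain ⟨p, hp⟩ := Xα.nonemp s hs
    obtain ⟨s', hs', hps'⟩ := X'α'.cover (f p.1, f p.2)
    -- by forward direction s' = relImage f s1
    have h1 : ∃ s1 ∈ Xα.S, s' = relImage f s1 := by
      obtain ⟨p'', hp''⟩ := X'α'.nonemp s' hs'
      obtain ⟨c, hc, hpc⟩ := (pushCfg f hfb Xα).cover p''
      have hcs' : c ⊆ s' := hleA s' hs' c hc ⟨p'', hpc, hp''⟩
      obtain ⟨s1, hs1, rfl⟩ := hc
      refine ⟨s1, hs1, ?_⟩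
      obtain ⟨⟨a, b⟩, hab, rfl⟩ := hpc
      have hmem : (a, b) ∈ relImage finv s' := by
        have := mem_relImage (f := finv) hp''
        simpa only [hfinv, Equiv.ofBijective_symm_apply_apply] using this
      have hsub : relImage finv s' ⊆ s1 :=
        hleB s1 hs1 _ ⟨s', hs', rfl⟩ ⟨(a, b), hmem, hab⟩
      refine Set.Subset.antisymm ?_ hcs'
      intro q hq
      have : (f ((finv q.1)), f (finv q.2)) ∈ relImage f s1 :=
        mem_relImage (hsub (mem_relImage (a := q.1) (b := q.2) hq))
      simpa only [happ, Prod.mk.eta] using this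
    obtain ⟨s1, hs1, rfl⟩ := h1
    have : s1 = s := by
      refine basis_eq Xα hs1 hs ⟨p, ?_, hp⟩
      exact (mem_relImage_iff hfb.1 (a := p.1) (b := p.2)).mp (by simpa using hps')
    rw [← this]
    exact hs'

end Push

section Star

variable {Ω : Type u}

/-- basis relations of `Xα` incident to `α` have source `{α}` -/
lemma star_source {X Xα : CohCfg Ω} {α : Ω} (hXα : IsPointExt X α Xα)
    {s : Set (Ω × Ω)} (hs : s ∈ Xα.S) {x : Ω} (hx : (α, x) ∈ s) :
    ∀ p ∈ s, (p : Ω × Ω).1 = α := by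
  rintro ⟨x', y'⟩ hp
  have h1α : ({(α, α)} : Set (Ω × Ω)) ∈ Xα.S := hXα.2.1
  have h := Xα.inum {(α, α)} h1α s hs s hs (α, x) hx (x', y') hp
  simp only at h
  have hLHS : {γ : Ω | (α, γ) ∈ ({(α, α)} : Set (Ω × Ω)) ∧ (γ, x) ∈ s} = {α} := by
    ext γ
    simp only [Set.mem_setOf_eq, Set.mem_singleton_iff]
    constructor
    · rintro ⟨h1, _⟩
      exact (Prod.ext_iff.mp h1).2
    · rintro rfl
      exact ⟨rfl, hx⟩
  rw [hLHS, Set.ncard_singleton] at h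
  have hne : {γ : Ω | (x', γ) ∈ ({(α, α)} : Set (Ω × Ω)) ∧ (γ, y') ∈ s}.Nonempty := by
    apply Set.nonempty_of_ncard_ne_zero
    omega
  obtain ⟨γ, hγ1, _⟩ := hne
  simp only [Set.mem_singleton_iff, Prod.mk.injEq] at hγ1
  exact hγ1.1

/-- uniqueness of the star relation inside a given basis relation of X -/
lemma star_eq {X Xα : CohCfg Ω} {α : Ω} (hXα : IsPointExt X α Xα) (hschur : Schurian X)
    {r r' : Set (Ω × Ω)} (hr : r ∈ Xα.S) (hr' : r' ∈ Xα.S) {t : Set (Ω × Ω)} (ht : t ∈ X.S)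
    (hsub : r ⊆ t) (hsub' : r' ⊆ t) {x x' : Ω} (hx : (α, x) ∈ r) (hx' : (α, x') ∈ r') :
    r = r' := by
  obtain ⟨k, hk, hkx⟩ := schurian_pt hschur ht (hsub hx) (hsub' hx')
  have hmem : (α, x') ∈ r := by
    rw [← autPt_fixes_ext hXα hk hr]
    refine ⟨(α, x), hx, ?_⟩
    simp only [Prod.mk.injEq]
    exact ⟨hk.2.2, hkx⟩
  exact basis_eq Xα hr hr' ⟨(α, x'), hmem, hx'⟩

end Star

section Uniqueness

lemma ncard_biUnion_congr {γty ι : Type u} [Finite γty] (I : Finset ι) (B C : ι → Set γty) :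
    (∀ i ∈ I, ∀ j ∈ I, i ≠ j → B i ∩ B j = ∅) →
    (∀ i ∈ I, ∀ j ∈ I, i ≠ j → C i ∩ C j = ∅) →
    (∀ i ∈ I, (B i).ncard = (C i).ncard) →
    (⋃ i ∈ I, B i).ncard = (⋃ i ∈ I, C i).ncard := by
  classical
  induction I using Finset.induction_on with
  | empty => intro _ _ _; simp
  | @insert a I haI ih =>
    intro hB hC h
    rw [Finset.set_biUnion_insert, Finset.set_biUnion_insert]
    have hdB : Disjoint (B a) (⋃ i ∈ I, B i) := by
      rw [Set.disjoint_left]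
      intro x hxa hxI
      obtain ⟨i, hi, hxi⟩ := Set.mem_iUnion₂.mp hxI
      have hne : a ≠ i := fun hh => haI (hh ▸ hi)
      have hempty := hB a (Finset.mem_insert_self a I) i (Finset.mem_insert_of_mem hi) hne
      have : x ∈ B a ∩ B i := ⟨hxa, hxi⟩
      rw [hempty] at this
      exact this
    have hdC : Disjoint (C a) (⋃ i ∈ I, C i) := by
      rw [Set.disjoint_left]
      intro x hxa hxI
      obtain ⟨i, hi, hxi⟩ := Set.mem_iUnion₂.mp hxI
      have hne : a ≠ i := fun hh => haI (hh ▸ hi)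
      have hempty := hC a (Finset.mem_insert_self a I) i (Finset.mem_insert_of_mem hi) hne
      have : x ∈ C a ∩ C i := ⟨hxa, hxi⟩
      rw [hempty] at this
      exact this
    rw [Set.ncard_union_eq hdB (Set.toFinite _) (Set.toFinite _),
        Set.ncard_union_eq hdC (Set.toFinite _) (Set.toFinite _),
        h a (Finset.mem_insert_self a I),
        ih (fun i hi j hj => hB i (Finset.mem_insert_of_mem hi) j (Finset.mem_insert_of_mem hj))
           (fun i hi j hj => hC i (Finset.mem_insert_of_mem hi) j (Finset.mem_insert_of_mem hj))
           (fun i hi => h i (Finset.mem_insert_of_mem hi))]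

variable {Ω Ω' : Type u}

/-- Uniqueness of the (α,α')-extension: `ψ` coincides with the algebraic
isomorphism induced by `f` on all basis relations of `Xα`. -/
lemma psi_eq_relImage {X : CohCfg Ω} {X' : CohCfg Ω'} (hX : IsScheme X)
    {φ : Set (Ω × Ω) → Set (Ω' × Ω')} (hφ : IsAlgIso X X' φ) {α : Ω} {α' : Ω'}
    {Xα : CohCfg Ω} {X'α' : CohCfg Ω'}
    (hXα : IsPointExt X α Xα) (hX'α' : IsPointExt X' α' X'α')
    {ψ : Set (Ω × Ω) → Set (Ω' × Ω')} (hψ : IsAlgIso Xα X'α' ψ)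
    (hψext : ∀ s ∈ X.S, algImage Xα ψ s = φ s)
    (hψα : ψ {(α, α)} = {(α', α')})
    {f : Ω → Ω'} (hfb : Function.Bijective f)
    (hfφ : ∀ s ∈ X.S, relImage f s = φ s) (hfα : f α = α') :
    ∀ s ∈ Xα.S, ψ s = relImage f s := by
  haveI := X.finite
  set finv : Ω' → Ω := ⇑(Equiv.ofBijective f hfb).symm with hfinvdef
  have hfinvb : Function.Bijective finv := (Equiv.ofBijective f hfb).symm.bijective
  set σ : Set (Ω × Ω) → Set (Ω × Ω) := fun s => relImage finv (ψ s) with hσdef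
  have hσapp : ∀ s, σ s = relImage finv (ψ s) := fun _ => rfl
  have hfσ : ∀ s, relImage f (σ s) = ψ s := by
    intro s
    rw [hσapp, hfinvdef]
    exact relImage_comp_symm hfb (ψ s)
  suffices hfix : ∀ s ∈ Xα.S, σ s = s by
    intro s hs
    rw [← hfσ s, hfix s hs]
  have hPE : ∀ {s' : Set (Ω' × Ω')}, s' ∈ X'α'.S ↔ ∃ s ∈ Xα.S, s' = relImage f s :=
    fun {s'} => pointExt_push_eq hXα hX'α' hφ hfb hfφ hfα
  have hσmem : ∀ {s}, s ∈ Xα.S → σ s ∈ Xα.S := by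
    intro s hs
    obtain ⟨s1, hs1, heq⟩ := hPE.mp (hψ.bijOn.mapsTo hs)
    rw [hσapp, heq, hfinvdef, relImage_symm_comp hfb]
    exact hs1
  have hσinj : ∀ {s t}, s ∈ Xα.S → t ∈ Xα.S → σ s = σ t → s = t := by
    intro s t hs ht h
    have h2 : ψ s = ψ t := by rw [← hfσ s, ← hfσ t, h]
    exact hψ.bijOn.injOn hs ht h2
  have hσcnum : ∀ {r s t}, r ∈ Xα.S → s ∈ Xα.S → t ∈ Xα.S → ∀ p ∈ t, ∀ q ∈ σ t,
      cnum r s p = cnum (σ r) (σ s) q := by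
    intro r s t hr hs ht p hp q hq
    rw [hσapp] at hq
    obtain ⟨⟨x, y⟩, hxy, rfl⟩ := hq
    have h1 := hψ.cnum_eq r hr s hs t ht p hp (x, y) hxy
    have h2 := cnum_relImage hfinvb (ψ r) (ψ s) (x, y)
    rw [h1, ← h2, ← hσapp, ← hσapp]
  have hσcoarse : ∀ {s t}, s ∈ Xα.S → t ∈ X.S → s ⊆ t → σ s ⊆ t := by
    intro s t hs ht hsub
    have h1 : ψ s ⊆ φ t := by
      rw [← hψext t ht]
      exact fun q hq => ⟨ψ s, ⟨s, ⟨hs, hsub⟩, rfl⟩, hq⟩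
    rw [hσapp]
    calc relImage finv (ψ s) ⊆ relImage finv (φ t) := relImage_mono _ h1
      _ = t := by rw [← hfφ t ht, hfinvdef, relImage_symm_comp hfb]
  have hσ1α : σ {(α, α)} = {(α, α)} := by
    rw [hσapp, hψα, relImage_singleton]
    have : finv α' = α := by
      rw [← hfα, hfinvdef]
      exact (Equiv.ofBijective f hfb).symm_apply_apply α
    rw [this]
  -- σ commutes with converse
  have hconv : ∀ {s}, s ∈ Xα.S → σ {p : Ω × Ω | (p.2, p.1) ∈ s} = {p | (p.2, p.1) ∈ σ s} := by
    intro s hs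
    have hsc : {p : Ω × Ω | (p.2, p.1) ∈ s} ∈ Xα.S := Xα.conv s hs
    obtain ⟨⟨x, y⟩, hxy⟩ := Xα.nonemp s hs
    obtain ⟨tx, htx, hxx⟩ := Xα.cover (x, x)
    obtain ⟨⟨z, w⟩, hzw⟩ := Xα.nonemp (σ tx) (hσmem htx)
    have htxd : tx ⊆ {p : Ω × Ω | p.1 = p.2} := by
      intro r hrow
      exact Xα.diag tx htx ⟨(x, x), hxx, rfl⟩ r hrow
    have hzwd : z = w := hσcoarse htx hX htxd hzw
    subst hzwd
    have h1 : cnum s {p : Ω × Ω | (p.2, p.1) ∈ s} (x, x) ≠ 0 := by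
      intro hc
      rw [cnum, Set.ncard_eq_zero (Set.toFinite _)] at hc
      have : y ∈ {γ : Ω | ((x, x).1, γ) ∈ s ∧ (γ, (x, x).2) ∈ {p : Ω × Ω | (p.2, p.1) ∈ s}} :=
        ⟨hxy, hxy⟩
      rw [hc] at this
      exact this
    have h2 := hσcnum hs hsc htx (x, x) hxx (z, z) hzw
    rw [h2] at h1
    have h3 : {γ : Ω | ((z, z).1, γ) ∈ σ s ∧ (γ, (z, z).2) ∈ σ {p : Ω × Ω | (p.2, p.1) ∈ s}}.Nonempty := by
      apply Set.nonempty_of_ncard_ne_zero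
      exact h1
    obtain ⟨γ, hγ1, hγ2⟩ := h3
    refine basis_eq Xα (hσmem hsc) (Xα.conv (σ s) (hσmem hs)) ⟨(γ, z), hγ2, ?_⟩
    exact hγ1
  -- iterates
  have hitmem : ∀ n, ∀ {s}, s ∈ Xα.S → σ^[n] s ∈ Xα.S := by
    intro n
    induction n with
    | zero => intro s hs; simpa using hs
    | succ n ih =>
      intro s hs
      rw [Function.iterate_succ_apply']
      exact hσmem (ih hs)
  have hitinj : ∀ n, ∀ {s t}, s ∈ Xα.S → t ∈ Xα.S → σ^[n] s = σ^[n] t → s = t := by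
    intro n
    induction n with
    | zero => intro s t _ _ h; simpa using h
    | succ n ih =>
      intro s t hs ht h
      rw [Function.iterate_succ_apply', Function.iterate_succ_apply'] at h
      exact ih hs ht (hσinj (hitmem n hs) (hitmem n ht) h)
  have hitcoarse : ∀ n, ∀ {s t}, s ∈ Xα.S → t ∈ X.S → s ⊆ t → σ^[n] s ⊆ t := by
    intro n
    induction n with
    | zero => intro s t _ _ h; simpa using h
    | succ n ih =>
      intro s t hs ht h
      rw [Function.iterate_succ_apply']
      exact hσcoarse (hitmem n hs) ht (ih hs ht h)
  have hitconv : ∀ n, ∀ {s}, s ∈ Xα.S →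
      σ^[n] {p : Ω × Ω | (p.2, p.1) ∈ s} = {p | (p.2, p.1) ∈ σ^[n] s} := by
    intro n
    induction n with
    | zero => intro s _; simp
    | succ n ih =>
      intro s hs
      rw [Function.iterate_succ_apply', Function.iterate_succ_apply', ih hs,
        hconv (hitmem n hs)]
  have hitcnum : ∀ n, ∀ {r s t}, r ∈ Xα.S → s ∈ Xα.S → t ∈ Xα.S → ∀ p ∈ t, ∀ q ∈ σ^[n] t,
      cnum r s p = cnum (σ^[n] r) (σ^[n] s) q := by
    intro n
    induction n with
    | zero =>
      intro r s t hr hs ht p hp q hq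
      simp only [Function.iterate_zero, id_eq] at hq ⊢
      exact Xα.inum r hr s hs t ht p hp q hq
    | succ n ih =>
      intro r s t hr hs ht p hp q hq
      rw [Function.iterate_succ_apply'] at hq
      obtain ⟨p', hp'⟩ := Xα.nonemp (σ^[n] t) (hitmem n ht)
      rw [ih hr hs ht p hp p' hp', Function.iterate_succ_apply', Function.iterate_succ_apply']
      exact hσcnum (hitmem n hr) (hitmem n hs) (hitmem n ht) p' hp' q hq
  -- periodicity
  have hmul : ∀ {u}, u ∈ Xα.S → ∀ {P}, σ^[P] u = u → ∀ c, σ^[c * P] u = u := by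
    intro u hu P hP c
    induction c with
    | zero => simp
    | succ c ih =>
      have : (c + 1) * P = c * P + P := by ring
      rw [this, Function.iterate_add_apply, hP, ih]
  have hperiod : ∀ {s}, s ∈ Xα.S → ∃ P, 0 < P ∧ σ^[P] s = s := by
    intro s hs
    haveI : Finite (Set (Ω × Ω)) := inferInstance
    obtain ⟨i, j, hij, heq⟩ := Finite.exists_ne_map_eq_of_infinite (fun n : ℕ => σ^[n] s)
    rcases Nat.lt_or_ge i j with hlt | hge
    · refine ⟨j - i, by omega, ?_⟩
      have : σ^[i] (σ^[j - i] s) = σ^[i] s := by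
        rw [← Function.iterate_add_apply, show i + (j - i) = j from by omega, heq]
      exact hitinj i (hitmem (j - i) hs) hs this
    · have hlt : j < i := by omega
      refine ⟨i - j, by omega, ?_⟩
      have : σ^[j] (σ^[i - j] s) = σ^[j] s := by
        rw [← Function.iterate_add_apply, show j + (i - j) = i from by omega, heq]
      exact hitinj j (hitmem (i - j) hs) hs this
  -- orbits
  set Orb : Set (Ω × Ω) → Set (Set (Ω × Ω)) := fun s => {t | ∃ n, σ^[n] s = t} with hOrbdef
  have hOrbself : ∀ s, s ∈ Orb s := fun s => ⟨0, rfl⟩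
  have hOrbmem : ∀ {s}, s ∈ Xα.S → ∀ {t}, t ∈ Orb s → t ∈ Xα.S := by
    rintro s hs t ⟨n, rfl⟩
    exact hitmem n hs
  have hOrbsymm : ∀ {s}, s ∈ Xα.S → ∀ {t}, t ∈ Orb s → ∃ m, σ^[m] t = s := by
    rintro s hs t ⟨n, rfl⟩
    obtain ⟨P, hP, hPs⟩ := hperiod hs
    refine ⟨(n + 1) * P - n, ?_⟩
    have hle' : n + 1 ≤ (n + 1) * P := Nat.le_mul_of_pos_right _ hP
    rw [← Function.iterate_add_apply, show (n + 1) * P - n + n = (n + 1) * P from by omega]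
    exact hmul hs hPs (n + 1)
  have hOrbeq : ∀ {s}, s ∈ Xα.S → ∀ {t}, t ∈ Orb s → Orb t = Orb s := by
    intro s hs t ht
    ext u
    constructor
    · rintro ⟨n, rfl⟩
      obtain ⟨m, hm⟩ := ht
      exact ⟨n + m, by rw [Function.iterate_add_apply, hm]⟩
    · rintro ⟨n, rfl⟩
      obtain ⟨m, hm⟩ := hOrbsymm hs ht
      exact ⟨n + m, by rw [Function.iterate_add_apply, hm]⟩
  have hOrbsurj : ∀ {s}, s ∈ Xα.S → ∀ m, ∀ {u}, u ∈ Orb s → ∃ v ∈ Orb s, σ^[m] v = u := by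
    intro s hs m u hu
    have hus : u ∈ Xα.S := hOrbmem hs hu
    obtain ⟨P, hP, hPu⟩ := hperiod hus
    refine ⟨σ^[(m + 1) * P - m] u, ?_, ?_⟩
    · rw [← hOrbeq hs hu]
      exact ⟨(m + 1) * P - m, rfl⟩
    · have hle' : m + 1 ≤ (m + 1) * P := Nat.le_mul_of_pos_right _ hP
      rw [← Function.iterate_add_apply, show m + ((m + 1) * P - m) = (m + 1) * P from by omega]
      exact hmul hus hPu (m + 1)
  -- the fusion configuration
  let W : CohCfg Ω := {
    S := {T | ∃ s ∈ Xα.S, T = ⋃₀ Orb s}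
    finite := X.finite
    cover := fun p => by
      obtain ⟨s, hs, hps⟩ := Xα.cover p
      exact ⟨⋃₀ Orb s, ⟨s, hs, rfl⟩, ⟨s, hOrbself s, hps⟩⟩
    disj := by
      rintro T1 ⟨s1, hs1, rfl⟩ T2 ⟨s2, hs2, rfl⟩ hne
      rw [Set.eq_empty_iff_forall_notMem]
      rintro p ⟨⟨u1, hu1, hpu1⟩, ⟨u2, hu2, hpu2⟩⟩
      have hu12 : u1 = u2 := basis_eq Xα (hOrbmem hs1 hu1) (hOrbmem hs2 hu2) ⟨p, hpu1, hpu2⟩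
      subst hu12
      exact hne (by rw [← hOrbeq hs1 hu1, hOrbeq hs2 hu2])
    nonemp := by
      rintro T ⟨s, hs, rfl⟩
      obtain ⟨p, hp⟩ := Xα.nonemp s hs
      exact ⟨p, s, hOrbself s, hp⟩
    diag := by
      rintro T ⟨s, hs, rfl⟩ ⟨p, ⟨u, hu, hpu⟩, hpd⟩ q ⟨v, hv, hqv⟩
      have hu' := hOrbmem hs hu
      have hud : u ⊆ {p : Ω × Ω | p.1 = p.2} := fun r hr => Xα.diag u hu' ⟨p, hpu, hpd⟩ r hr
      obtain ⟨m, hm⟩ := hOrbsymm hs hu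
      have hsd : s ⊆ {p : Ω × Ω | p.1 = p.2} := hm ▸ hitcoarse m hu' hX hud
      obtain ⟨n, hn⟩ := hv
      have hvd : v ⊆ {p : Ω × Ω | p.1 = p.2} := hn ▸ hitcoarse n hs hX hsd
      exact hvd hqv
    conv := by
      rintro T ⟨s, hs, rfl⟩
      refine ⟨{p | (p.2, p.1) ∈ s}, Xα.conv s hs, ?_⟩
      ext ⟨x, y⟩
      constructor
      · rintro ⟨u, ⟨n, rfl⟩, hxy⟩
        refine ⟨σ^[n] {p | (p.2, p.1) ∈ s}, ⟨n, rfl⟩, ?_⟩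
        rw [hitconv n hs]
        exact hxy
      · rintro ⟨u, ⟨n, rfl⟩, hxy⟩
        rw [hitconv n hs] at hxy
        exact ⟨σ^[n] s, ⟨n, rfl⟩, hxy⟩
    inum := by
      rintro R ⟨r, hr, rfl⟩ S2 ⟨s, hs2, rfl⟩ T ⟨t, ht, rfl⟩ p hp q hq
      obtain ⟨tp, htp, hptp⟩ := hp
      obtain ⟨tq, htq, hqtq⟩ := hq
      have htp' : tp ∈ Xα.S := hOrbmem ht htp
      have htq2 : tq ∈ Orb tp := by rw [hOrbeq ht htp]; exact htq
      obtain ⟨m, hm⟩ := htq2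
      classical
      set I : Finset (Set (Ω × Ω) × Set (Ω × Ω)) :=
        (Set.toFinite ((Orb r) ×ˢ (Orb s))).toFinset with hI
      have hImem : ∀ i : Set (Ω × Ω) × Set (Ω × Ω), i ∈ I ↔ i.1 ∈ Orb r ∧ i.2 ∈ Orb s := by
        intro i
        rw [hI, Set.Finite.mem_toFinset, Set.mem_prod]
      have hdecompP : {γ : Ω | (p.1, γ) ∈ ⋃₀ Orb r ∧ (γ, p.2) ∈ ⋃₀ Orb s}
          = ⋃ i ∈ I, {γ : Ω | (p.1, γ) ∈ i.1 ∧ (γ, p.2) ∈ i.2} := by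
        ext γ
        constructor
        · rintro ⟨⟨u, hu, h1⟩, ⟨v, hv, h2⟩⟩
          exact Set.mem_iUnion₂.mpr ⟨(u, v), (hImem (u, v)).mpr ⟨hu, hv⟩, h1, h2⟩
        · intro h
          obtain ⟨i, hi, h1, h2⟩ := Set.mem_iUnion₂.mp h
          obtain ⟨hi1, hi2⟩ := (hImem i).mp hi
          exact ⟨⟨i.1, hi1, h1⟩, ⟨i.2, hi2, h2⟩⟩
      have hdecompQ : {γ : Ω | (q.1, γ) ∈ ⋃₀ Orb r ∧ (γ, q.2) ∈ ⋃₀ Orb s}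
          = ⋃ i ∈ I, {γ : Ω | (q.1, γ) ∈ σ^[m] i.1 ∧ (γ, q.2) ∈ σ^[m] i.2} := by
        ext γ
        constructor
        · rintro ⟨⟨u, hu, h1⟩, ⟨v, hv, h2⟩⟩
          obtain ⟨u0, hu0, hu0eq⟩ := hOrbsurj hr m hu
          obtain ⟨v0, hv0, hv0eq⟩ := hOrbsurj hs2 m hv
          refine Set.mem_iUnion₂.mpr ⟨(u0, v0), (hImem (u0, v0)).mpr ⟨hu0, hv0⟩, ?_, ?_⟩
          · rw [hu0eq]; exact h1
          · rw [hv0eq]; exact h2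
        · intro h
          obtain ⟨i, hi, h1, h2⟩ := Set.mem_iUnion₂.mp h
          obtain ⟨hi1, hi2⟩ := (hImem i).mp hi
          refine ⟨⟨σ^[m] i.1, ?_, h1⟩, ⟨σ^[m] i.2, ?_, h2⟩⟩
          · obtain ⟨n, hn⟩ := hi1
            exact ⟨m + n, by rw [Function.iterate_add_apply, hn]⟩
          · obtain ⟨n, hn⟩ := hi2
            exact ⟨m + n, by rw [Function.iterate_add_apply, hn]⟩
      rw [hdecompP, hdecompQ]
      refine ncard_biUnion_congr I _ _ ?_ ?_ ?_
      · intro i hi j hj hne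
        obtain ⟨hi1, hi2⟩ := (hImem i).mp hi
        obtain ⟨hj1, hj2⟩ := (hImem j).mp hj
        rw [Set.eq_empty_iff_forall_notMem]
        rintro γ ⟨⟨h1, h2⟩, ⟨h3, h4⟩⟩
        have e1 : i.1 = j.1 := basis_eq Xα (hOrbmem hr hi1) (hOrbmem hr hj1) ⟨(p.1, γ), h1, h3⟩
        have e2 : i.2 = j.2 := basis_eq Xα (hOrbmem hs2 hi2) (hOrbmem hs2 hj2) ⟨(γ, p.2), h2, h4⟩
        exact hne (Prod.ext e1 e2)
      · intro i hi j hj hne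
        obtain ⟨hi1, hi2⟩ := (hImem i).mp hi
        obtain ⟨hj1, hj2⟩ := (hImem j).mp hj
        rw [Set.eq_empty_iff_forall_notMem]
        rintro γ ⟨⟨h1, h2⟩, ⟨h3, h4⟩⟩
        have e1 : σ^[m] i.1 = σ^[m] j.1 :=
          basis_eq Xα (hitmem m (hOrbmem hr hi1)) (hitmem m (hOrbmem hr hj1)) ⟨(q.1, γ), h1, h3⟩
        have e2 : σ^[m] i.2 = σ^[m] j.2 :=
          basis_eq Xα (hitmem m (hOrbmem hs2 hi2)) (hitmem m (hOrbmem hs2 hj2)) ⟨(γ, q.2), h2, h4⟩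
        exact hne (Prod.ext (hitinj m (hOrbmem hr hi1) (hOrbmem hr hj1) e1)
          (hitinj m (hOrbmem hs2 hi2) (hOrbmem hs2 hj2) e2))
      · intro i hi
        obtain ⟨hi1, hi2⟩ := (hImem i).mp hi
        have := hitcnum m (hOrbmem hr hi1) (hOrbmem hs2 hi2) htp' p hptp q (by rw [hm]; exact hqtq)
        unfold cnum at this
        exact this
  }
  -- minimality forces σ to fix every basis relation
  have hleW : le Xα W := by
    refine hXα.2.2 W ?_ ?_
    · intro t ht
      rintro T ⟨s, hs, rfl⟩ ⟨p, ⟨u, hu, hpu⟩, hpt⟩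
      have hu' := hOrbmem hs hu
      have hut : u ⊆ t := hXα.1 t ht u hu' ⟨p, hpu, hpt⟩
      rintro q ⟨v, hv, hqv⟩
      obtain ⟨m, hm⟩ := hOrbsymm hs hu
      have hst : s ⊆ t := hm ▸ hitcoarse m hu' ht hut
      obtain ⟨n, hn⟩ := hv
      exact (hn ▸ hitcoarse n hs ht hst) hqv
    · have h1n : ∀ n, σ^[n] ({(α, α)} : Set (Ω × Ω)) = {(α, α)} := by
        intro n
        induction n with
        | zero => rfl
        | succ n ih => rw [Function.iterate_succ_apply', ih, hσ1α]
      refine ⟨{(α, α)}, hXα.2.1, ?_⟩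
      apply Set.Subset.antisymm
      · intro p hp
        exact ⟨{(α, α)}, hOrbself _, hp⟩
      · rintro p ⟨v, ⟨n, rfl⟩, hp⟩
        rw [h1n n] at hp
        exact hp
  intro s hs
  have hTsub : ⋃₀ Orb s ⊆ s := by
    refine hleW s hs (⋃₀ Orb s) ⟨s, hs, rfl⟩ ?_
    obtain ⟨p, hp⟩ := Xα.nonemp s hs
    exact ⟨p, ⟨s, hOrbself s, hp⟩, hp⟩
  have hσsub : σ s ⊆ s := by
    intro p hp
    exact hTsub ⟨σ s, ⟨1, by simp⟩, hp⟩
  obtain ⟨p, hp⟩ := Xα.nonemp (σ s) (hσmem hs)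
  exact basis_eq Xα (hσmem hs) hs ⟨p, hp, hσsub hp⟩

end Uniqueness

section SectionMach

variable {Ω Ω₂ : Type u}

def IsEquivRel (e : Set (Ω × Ω)) : Prop :=
  (∀ a, (a, a) ∈ e) ∧ (∀ p ∈ e, ((p : Ω × Ω).2, p.1) ∈ e) ∧
    ∀ a b c : Ω, (a, b) ∈ e → (b, c) ∈ e → (a, c) ∈ e

lemma isEquivRel_of_parabolic {X : CohCfg Ω} {e : Set (Ω × Ω)} (h : IsParabolic X e) :
    IsEquivRel e := ⟨h.2.1, h.2.2.1, h.2.2.2⟩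

lemma mem_eClass_self {e : Set (Ω × Ω)} (he : IsEquivRel e) (a : Ω) : a ∈ eClass e a :=
  he.1 a

lemma eClass_eq_of_mem {e : Set (Ω × Ω)} (he : IsEquivRel e) {a b : Ω}
    (h : b ∈ eClass e a) : eClass e a = eClass e b := by
  ext c
  constructor
  · intro hc
    exact he.2.2 b a c (he.2.1 (a, b) h) hc
  · intro hc
    exact he.2.2 a b c h hc

lemma isEquivRel_relImage {k : Ω → Ω₂} (hkb : Function.Bijective k) {e : Set (Ω × Ω)}
    (he : IsEquivRel e) : IsEquivRel (relImage k e) := by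
  refine ⟨?_, ?_, ?_⟩
  · intro a
    obtain ⟨b, rfl⟩ := hkb.2 a
    exact mem_relImage (he.1 b)
  · rintro ⟨x, y⟩ ⟨⟨a, b⟩, hab, hh⟩
    simp only [Prod.mk.injEq] at hh
    obtain ⟨h1, h2⟩ := hh
    rw [← h1, ← h2]
    exact mem_relImage (he.2.1 (a, b) hab)
  · rintro x y z ⟨⟨a, b⟩, hab, hh1⟩ ⟨⟨b', c⟩, hbc, hh2⟩
    simp only [Prod.mk.injEq] at hh1 hh2
    have hbb' : b = b' := hkb.1 (hh1.2.trans hh2.1.symm)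
    subst hbb'
    rw [← hh1.1, ← hh2.2]
    exact mem_relImage (he.2.2 a b c hab hbc)

lemma image_eClass {k : Ω → Ω₂} (hkb : Function.Bijective k) (e : Set (Ω × Ω)) (a : Ω) :
    k '' eClass e a = eClass (relImage k e) (k a) := by
  ext y
  constructor
  · rintro ⟨b, hb, rfl⟩
    exact mem_relImage hb
  · rintro ⟨⟨c, d⟩, hcd, hh⟩
    simp only [Prod.mk.injEq] at hh
    have hc : c = a := hkb.1 hh.1
    subst hc
    exact ⟨d, hcd, hh.2⟩

/-- the bijection induced on sections by a compatible bijection of points -/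
noncomputable def secMap (k : Ω → Ω₂) (hkb : Function.Bijective k) (Δ : Set Ω)
    (e : Set (Ω × Ω)) (Δ₂ : Set Ω₂) (e₂ : Set (Ω₂ × Ω₂)) (hΔ₂ : Δ₂ = k '' Δ)
    (he₂ : e₂ = relImage k e) : Sec Δ e → Sec Δ₂ e₂ := fun Γ =>
  ⟨k '' Γ.1, by
    obtain ⟨a, haΔ, hΓ⟩ := Γ.2
    refine ⟨k a, by rw [hΔ₂]; exact ⟨a, haΔ, rfl⟩, ?_⟩
    rw [hΓ, image_eClass hkb, ← he₂]⟩

lemma secMap_apply (k : Ω → Ω₂) (hkb : Function.Bijective k) (Δ : Set Ω)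
    (e : Set (Ω × Ω)) (Δ₂ : Set Ω₂) (e₂ : Set (Ω₂ × Ω₂)) (hΔ₂ : Δ₂ = k '' Δ)
    (he₂ : e₂ = relImage k e) (Γ : Sec Δ e) :
    (secMap k hkb Δ e Δ₂ e₂ hΔ₂ he₂ Γ).1 = k '' Γ.1 := rfl

lemma secMap_bij (k : Ω → Ω₂) (hkb : Function.Bijective k) (Δ : Set Ω)
    (e : Set (Ω × Ω)) (Δ₂ : Set Ω₂) (e₂ : Set (Ω₂ × Ω₂)) (hΔ₂ : Δ₂ = k '' Δ)
    (he₂ : e₂ = relImage k e) :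
    Function.Bijective (secMap k hkb Δ e Δ₂ e₂ hΔ₂ he₂) := by
  constructor
  · intro Γ Λ h
    apply Subtype.ext
    have h1 : k '' Γ.1 = k '' Λ.1 := congrArg Subtype.val h
    exact Set.image_injective.mpr hkb.1 h1
  · intro Γ₂
    obtain ⟨a₂, ha₂, hΓ₂⟩ := Γ₂.2
    rw [hΔ₂] at ha₂
    obtain ⟨a, haΔ, ha₂eq⟩ := ha₂
    refine ⟨⟨eClass e a, a, haΔ, rfl⟩, Subtype.ext ?_⟩
    show k '' eClass e a = Γ₂.1
    rw [image_eClass hkb, ← he₂, hΓ₂, ha₂eq]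

lemma secRel_relImage (k : Ω → Ω₂) (hkb : Function.Bijective k) (Δ : Set Ω)
    (e : Set (Ω × Ω)) (Δ₂ : Set Ω₂) (e₂ : Set (Ω₂ × Ω₂)) (hΔ₂ : Δ₂ = k '' Δ)
    (he₂ : e₂ = relImage k e) (he : IsEquivRel e)
    (hcl : ∀ a ∈ Δ, ∀ b : Ω, (a, b) ∈ e → b ∈ Δ) (s : Set (Ω × Ω)) :
    secRel Δ₂ e₂ (relImage k s) = relImage (secMap k hkb Δ e Δ₂ e₂ hΔ₂ he₂) (secRel Δ e s) := by
  have he₂eq : IsEquivRel e₂ := by rw [he₂]; exact isEquivRel_relImage hkb he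
  apply Set.Subset.antisymm
  · rintro ⟨Γ₂, Λ₂⟩ ⟨a₂, ha₂, b₂, hb₂, ⟨⟨a, b⟩, hab, hh⟩⟩
    simp only [Prod.mk.injEq] at hh
    obtain ⟨ha, hb⟩ := hh
    -- a ∈ Δ
    have hclass : ∀ (Ξ₂ : Sec Δ₂ e₂) (x₂ : Ω₂) (x : Ω), x₂ ∈ Ξ₂.1 → k x = x₂ →
        x ∈ Δ ∧ Ξ₂.1 = eClass e₂ x₂ := by
      intro Ξ₂ x₂ x hx₂ hkx
      obtain ⟨c₂, hc₂Δ, hΞ⟩ := Ξ₂.2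
      have h1 : Ξ₂.1 = eClass e₂ x₂ := by
        rw [hΞ]
        exact eClass_eq_of_mem he₂eq (hΞ ▸ hx₂)
      refine ⟨?_, h1⟩
      rw [hΔ₂] at hc₂Δ
      obtain ⟨c, hcΔ, hc₂eq⟩ := hc₂Δ
      have hc₂x₂ : (c₂, x₂) ∈ e₂ := by
        have h3 := hx₂
        rw [hΞ] at h3
        exact h3
      rw [he₂, ← hc₂eq, ← hkx] at hc₂x₂
      exact hcl c hcΔ x ((mem_relImage_iff hkb.1).mp hc₂x₂)
    obtain ⟨haΔ, hΓeq⟩ := hclass Γ₂ a₂ a ha₂ ha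
    obtain ⟨hbΔ, hΛeq⟩ := hclass Λ₂ b₂ b hb₂ hb
    refine ⟨(⟨eClass e a, a, haΔ, rfl⟩, ⟨eClass e b, b, hbΔ, rfl⟩),
      ⟨a, mem_eClass_self he a, b, mem_eClass_self he b, hab⟩, ?_⟩
    simp only [Prod.mk.injEq]
    constructor
    · apply Subtype.ext
      show k '' eClass e a = Γ₂.1
      rw [image_eClass hkb, ← he₂, hΓeq, ha]
    · apply Subtype.ext
      show k '' eClass e b = Λ₂.1
      rw [image_eClass hkb, ← he₂, hΛeq, hb]
  · rintro ⟨Γ₂, Λ₂⟩ ⟨⟨Γ, Λ⟩, ⟨a, haΓ, b, hbΛ, hab⟩, hh⟩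
    simp only [Prod.mk.injEq] at hh
    obtain ⟨h1, h2⟩ := hh
    refine ⟨k a, ?_, k b, ?_, mem_relImage hab⟩
    · rw [← h1]; exact ⟨a, haΓ, rfl⟩
    · rw [← h2]; exact ⟨b, hbΛ, rfl⟩

/-- a section's big class is closed under `e` -/
lemma sec_closed {X : CohCfg Ω} {Δ : Set Ω} {e : Set (Ω × Ω)} (hsec : IsSection X Δ e) :
    ∀ a ∈ Δ, ∀ b : Ω, (a, b) ∈ e → b ∈ Δ := by
  obtain ⟨hepar, d, hdpar, hed, a0, hΔd⟩ := hsec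
  intro a haΔ b hab
  rw [hΔd] at haΔ ⊢
  exact hdpar.2.2.2 a0 a b haΔ (hed hab)

/-- point automorphisms preserve the class `Δ` of a section through `α` -/
lemma autPt_image_delta {X : CohCfg Ω} {Δ : Set Ω} {e : Set (Ω × Ω)}
    (hsec : IsSection X Δ e) {α : Ω} (hα : α ∈ Δ) {k : Ω → Ω} (hk : k ∈ AutPt X α) :
    k '' Δ = Δ := by
  obtain ⟨hepar, d, hdpar, hed, a0, hΔd⟩ := hsec
  have hdeq : IsEquivRel d := isEquivRel_of_parabolic hdpar
  have hΔα : Δ = eClass d α := by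
    rw [hΔd] at hα ⊢
    exact eClass_eq_of_mem hdeq hα
  have hkd : relImage k d = d := relImage_eq_self_of_rel hdpar.1 hk.1 hk.2.1
  rw [hΔα, image_eClass hk.1, hkd, hk.2.2]

end SectionMach
end CohCfg

open CohCfg in
/-- Lemma: let `φ : X → X'` be an algebraic isomorphism between schemes with an
`(α,α')`-extension `ψ : X_α → X'_{α'}`, `f ∈ Iso_{α,α'}(X,X',φ)`, `X` schurian,
and `(X_α)_𝔖` partly regular for a section `𝔖 = Δ/e` with `α ∈ Δ`.  Then the
bijections `𝔖 → 𝔖' = 𝔖^f` induced by elements of `Iso(X_α, X'_{α'}, ψ)` are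
exactly `Iso((X_α)_𝔖, (X'_{α'})_{𝔖'}, ψ_{𝔖,𝔖'})`. -/
theorem stmt_9 {Ω Ω' : Type u} (X : CohCfg Ω) (X' : CohCfg Ω')
    (hX : IsScheme X) (hX' : IsScheme X')
    (φ : Set (Ω × Ω) → Set (Ω' × Ω')) (hφ : IsAlgIso X X' φ)
    (α : Ω) (α' : Ω')
    -- the (α,α')-extension ψ = φ_{α,α'} of φ
    (Xα : CohCfg Ω) (hXα : IsPointExt X α Xα)
    (X'α' : CohCfg Ω') (hX'α' : IsPointExt X' α' X'α')
    (ψ : Set (Ω × Ω) → Set (Ω' × Ω')) (hψ : IsAlgIso Xα X'α' ψ)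
    (hψext : ∀ s ∈ X.S, algImage Xα ψ s = φ s)
    (hψα : ψ {(α, α)} = {(α', α')})
    -- f ∈ Iso_{α,α'}(X,X',φ)
    (f : Ω → Ω') (hf : f ∈ IsoSet X X' φ) (hfα : f α = α')
    -- (i) X is schurian
    (hschur : Schurian X)
    -- the section 𝔖 = Δ/e with α_𝔖 ≠ ∅, and 𝔖' = 𝔖^f
    (Δ : Set Ω) (e : Set (Ω × Ω)) (hsec : IsSection X Δ e) (hα : α ∈ Δ)
    (Δ' : Set Ω') (e' : Set (Ω' × Ω')) (hΔ' : Δ' = f '' Δ) (he' : e' = relImage f e)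
    -- (X_α)_𝔖 and (X'_{α'})_{𝔖'}
    (YS : CohCfg (Sec Δ e)) (hYS : IsSectionCfg Xα Δ e YS)
    -- (ii) (X_α)_𝔖 is partly regular
    (hpr : PartlyRegular YS)
    (Y'S : CohCfg (Sec Δ' e')) (hY'S : IsSectionCfg X'α' Δ' e' Y'S)
    -- the induced algebraic isomorphism ψ_{𝔖,𝔖'}
    (ψS : Set (Sec Δ e × Sec Δ e) → Set (Sec Δ' e' × Sec Δ' e'))
    (hψS : ∀ s ∈ Xα.S, (secRel Δ e s).Nonempty →
      ψS (secRel Δ e s) = secRel Δ' e' (ψ s)) :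
    {g : Sec Δ e → Sec Δ' e' | ∃ h ∈ IsoSet Xα X'α' ψ,
        h '' Δ = Δ' ∧ relImage h e = e' ∧ ∀ Γ : Sec Δ e, (g Γ).1 = h '' Γ.1} =
    IsoSet YS Y'S ψS := by
  
  haveI := X.finite
  haveI := YS.finite
  obtain ⟨hfb, hfφ⟩ := hf
  have hepar : IsParabolic X e := hsec.1
  have heequiv : IsEquivRel e := isEquivRel_of_parabolic hepar
  have hcl : ∀ a ∈ Δ, ∀ b : Ω, (a, b) ∈ e → b ∈ Δ := sec_closed hsec
  have hUNIQ : ∀ s ∈ Xα.S, ψ s = relImage f s :=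
    psi_eq_relImage hX hφ hXα hX'α' hψ hψext hψα hfb hfφ hfα
  have hclass : ∀ (Ξ : Sec Δ e) (x : Ω), x ∈ Ξ.1 → Ξ.1 = eClass e x := by
    intro Ξ x hx
    obtain ⟨c0, _, heq⟩ := Ξ.2
    have hx2 := hx
    rw [heq] at hx2
    rw [heq]
    exact eClass_eq_of_mem heequiv hx2
  set F : Sec Δ e → Sec Δ' e' := secMap f hfb Δ e Δ' e' hΔ' he' with hFdef
  have hFb : Function.Bijective F := secMap_bij f hfb Δ e Δ' e' hΔ' he'
  have hFcomm : ∀ s, secRel Δ' e' (relImage f s) = relImage F (secRel Δ e s) :=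
    fun s => secRel_relImage f hfb Δ e Δ' e' hΔ' he' heequiv hcl s
  ext g
  simp only [Set.mem_setOf_eq]
  constructor
  · -- the induced bijections are isomorphisms of the section configurations
    rintro ⟨h, ⟨hhb, hhψ⟩, hhΔ, hhe, hg⟩
    have hgsec : g = secMap h hhb Δ e Δ' e' hhΔ.symm hhe.symm :=
      funext fun Γ => Subtype.ext (hg Γ)
    constructor
    · rw [hgsec]
      exact secMap_bij h hhb Δ e Δ' e' hhΔ.symm hhe.symm
    · intro t ht
      rw [hYS] at ht
      obtain ⟨s, hs, heq, hne⟩ := ht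
      subst heq
      rw [hψS s hs hne, ← hhψ s hs,
        secRel_relImage h hhb Δ e Δ' e' hhΔ.symm hhe.symm heequiv hcl s, hgsec]
  · -- conversely, every isomorphism of the section configurations is induced
    rintro ⟨hgb, hgfix⟩
    set FE : Sec Δ e ≃ Sec Δ' e' := Equiv.ofBijective F hFb with hFEdef
    set u : Sec Δ e → Sec Δ e := fun Γ => FE.symm (g Γ) with hudef
    have hufix : ∀ t ∈ YS.S, relImage u t = t := by
      intro t ht
      have ht2 := ht
      rw [hYS] at ht2
      obtain ⟨s, hs, heq, hne⟩ := ht2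
      have hgt : relImage g t = relImage F t := by
        rw [hgfix t ht, heq, hψS s hs (heq ▸ hne), hUNIQ s hs, hFcomm s]
      have hcompu : relImage u t = relImage (⇑FE.symm) (relImage g t) := by
        rw [show u = ⇑FE.symm ∘ g from rfl, relImage_comp]
      rw [hcompu, hgt, hFEdef]
      exact relImage_symm_comp hFb t
    obtain ⟨Γ0, hΓ0⟩ := hpr
    obtain ⟨t0, ht0, hΓ00⟩ := YS.cover (Γ0, Γ0)
    have ht02 := ht0
    rw [hYS] at ht02
    obtain ⟨s0, hs0, ht0eq, ht0ne⟩ := ht02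
    have huΓ0 : (u Γ0, u Γ0) ∈ t0 := by
      rw [← hufix t0 ht0]
      exact mem_relImage hΓ00
    have hΓ00' : (Γ0, Γ0) ∈ secRel Δ e s0 := by rw [← ht0eq]; exact hΓ00
    obtain ⟨a, haΓ0, b, hbΓ0, hab⟩ := hΓ00'
    have huΓ0' : (u Γ0, u Γ0) ∈ secRel Δ e s0 := by rw [← ht0eq]; exact huΓ0
    obtain ⟨c, hcuΓ0, d, hduΓ0, hcd⟩ := huΓ0'
    -- find a point automorphism k with k a = c
    obtain ⟨ra, hra, haa⟩ := Xα.cover (α, a)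
    obtain ⟨rb, hrb, hbb⟩ := Xα.cover (α, b)
    have hras : {p : Ω × Ω | (p.2, p.1) ∈ ra} ∈ Xα.S := Xα.conv ra hra
    have hcount := Xα.inum {p : Ω × Ω | (p.2, p.1) ∈ ra} hras rb hrb s0 hs0 (a, b) hab (c, d) hcd
    have hαmem : α ∈ {γ : Ω | (((a, b) : Ω × Ω).1, γ) ∈ {p : Ω × Ω | (p.2, p.1) ∈ ra}
        ∧ (γ, ((a, b) : Ω × Ω).2) ∈ rb} := ⟨haa, hbb⟩
    have hnonempty : {γ : Ω | (((c, d) : Ω × Ω).1, γ) ∈ {p : Ω × Ω | (p.2, p.1) ∈ ra}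
        ∧ (γ, ((c, d) : Ω × Ω).2) ∈ rb}.Nonempty := by
      apply Set.nonempty_of_ncard_ne_zero
      rw [← hcount]
      intro hzero
      rw [Set.ncard_eq_zero (Set.toFinite _)] at hzero
      rw [hzero] at hαmem
      exact hαmem
    obtain ⟨γ, hγ1, hγ2⟩ := hnonempty
    have hγα : γ = α := star_source hXα hra haa (γ, c) hγ1
    subst hγα
    obtain ⟨tX, htX, hsubX⟩ := exists_coarse hXα.1 hra
    obtain ⟨k, hk, hkac⟩ := schurian_pt hschur htX (hsubX haa) (hsubX hγ1)
    have hkΔ : k '' Δ = Δ := autPt_image_delta hsec hα hk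
    have hke : relImage k e = e := relImage_eq_self_of_rel hepar.1 hk.1 hk.2.1
    have hkfix : ∀ s ∈ Xα.S, relImage k s = s := fun s hs => autPt_fixes_ext hXα hk hs
    set K : Sec Δ e → Sec Δ e := secMap k hk.1 Δ e Δ e hkΔ.symm hke.symm with hKdef
    have hKfix : ∀ t ∈ YS.S, relImage K t = t := by
      intro t ht
      rw [hYS] at ht
      obtain ⟨s, hs, heq, hne⟩ := ht
      subst heq
      rw [hKdef, ← secRel_relImage k hk.1 Δ e Δ e hkΔ.symm hke.symm heequiv hcl s, hkfix s hs]
    have hKΓ0 : K Γ0 = u Γ0 := by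
      apply Subtype.ext
      show k '' Γ0.1 = (u Γ0).1
      rw [hclass Γ0 a haΓ0, image_eClass hk.1, hke, hkac]
      exact (hclass (u Γ0) c hcuΓ0).symm
    have hsemis : ∀ δ : Sec Δ e, u δ = K δ := by
      intro δ
      obtain ⟨sδ, hsδ, hΓ0δ⟩ := YS.cover (Γ0, δ)
      have h1 : (u Γ0, u δ) ∈ sδ := by
        rw [← hufix sδ hsδ]
        exact mem_relImage hΓ0δ
      have h2 : (u Γ0, K δ) ∈ sδ := by
        rw [← hKΓ0, ← hKfix sδ hsδ]
        exact mem_relImage hΓ0δ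
      have hconvδ : {p : Sec Δ e × Sec Δ e | (p.2, p.1) ∈ sδ} ∈ YS.S := YS.conv sδ hsδ
      have hpt : ∀ β : Sec Δ e,
          {γ : Sec Δ e | (((β, β) : _ × _).1, γ) ∈ sδ ∧
            (γ, ((β, β) : _ × _).2) ∈ {p : Sec Δ e × Sec Δ e | (p.2, p.1) ∈ sδ}}
          = pointSet sδ β := by
        intro β
        ext γ
        exact ⟨fun ⟨hh, _⟩ => hh, fun hh => ⟨hh, hh⟩⟩
      have heqc := YS.inum sδ hsδ _ hconvδ t0 ht0 (u Γ0, u Γ0) huΓ0 (Γ0, Γ0) hΓ00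
      rw [hpt (u Γ0), hpt Γ0] at heqc
      have hle1 : (pointSet sδ (u Γ0)).ncard ≤ 1 := by
        rw [heqc]
        exact hΓ0 sδ hsδ
      exact ((Set.ncard_le_one (Set.toFinite _)).mp hle1) (u δ) h1 (K δ) h2
    have hgFK : ∀ Γ : Sec Δ e, g Γ = F (K Γ) := by
      intro Γ
      have h1 : FE (u Γ) = g Γ := FE.apply_symm_apply (g Γ)
      rw [← h1, hsemis Γ]
      rfl
    refine ⟨f ∘ k, ⟨⟨hfb.comp hk.1, fun s hs => ?_⟩, ?_, ?_, ?_⟩⟩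
    · rw [relImage_comp, hkfix s hs]
      exact (hUNIQ s hs).symm
    · rw [Set.image_comp, hkΔ]
      exact hΔ'.symm
    · rw [relImage_comp, hke]
      exact he'.symm
    · intro Γ
      rw [hgFK Γ]
      show f '' (K Γ).1 = (f ∘ k) '' Γ.1
      rw [Set.image_comp]
      rfl
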